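/- Given r ∈ (0,1) and q ∈ [0,1), setting p = √(1/r² + ((1-r²)/(2r²q))²) - (1-r²)/(2r²q) (for q > 0) one has p ∈ [0,1), q = p(1-r²)/(1-r²p²), and the corresponding radius is ρ = (1 + r² - √(1 + (4q²-2)r² + r⁴))/(2r). -/

import Mathlib

theorem disk_automorphism_solve (r q : ℝ) (hr0 : 0 < r) (hr1 : r < 1) (hq0 : 0 < q) (hq1 : q < 1)
    (p : ℝ)
    (hp : p = Real.sqrt (1 / r ^ 2 + ((1 - r ^ 2) / (2 * r ^ 2 * q)) ^ 2)
            - (1 - r ^ 2) / (2 * r ^ 2 * q)) :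
    (0 ≤ p ∧ p < 1) ∧ q = p * (1 - r ^ 2) / (1 - r ^ 2 * p ^ 2) ∧
      r * (1 - p ^ 2) / (1 - r ^ 2 * p ^ 2)
        = (1 + r ^ 2 - Real.sqrt (1 + (4 * q ^ 2 - 2) * r ^ 2 + r ^ 4)) / (2 * r) := by
  have hr2 : (0:ℝ) < r ^ 2 := by positivity
  have h1r2 : (0:ℝ) < 1 - r ^ 2 := by nlinarith
  set T := Real.sqrt ((1 - r ^ 2) ^ 2 + 4 * q ^ 2 * r ^ 2) with hTdef
  have hT0 : 0 ≤ T := Real.sqrt_nonneg _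
  have hT2 : T ^ 2 = (1 - r ^ 2) ^ 2 + 4 * q ^ 2 * r ^ 2 := by
    rw [hTdef, Real.sq_sqrt]; positivity
  have hq2 : (0:ℝ) < q ^ 2 := by positivity
  have hTgt : 1 - r ^ 2 < T := by
    nlinarith [hT2, mul_pos hq2 hr2, mul_nonneg hT0 (le_of_lt h1r2)]
  have hTlt : T < 1 - r ^ 2 + 2 * r ^ 2 * q := by
    nlinarith [hT2, mul_pos h1r2 (show (0:ℝ) < 1 - q by linarith),
      mul_pos hr2 hq0, mul_pos (mul_pos hr2 hq0) (mul_pos h1r2 (show (0:ℝ) < 1 - q by linarith))]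
  have hden : (0:ℝ) < 2 * r ^ 2 * q := by positivity
  have hsq : Real.sqrt (1 / r ^ 2 + ((1 - r ^ 2) / (2 * r ^ 2 * q)) ^ 2)
      = T / (2 * r ^ 2 * q) := by
    have h : 1 / r ^ 2 + ((1 - r ^ 2) / (2 * r ^ 2 * q)) ^ 2
        = (T / (2 * r ^ 2 * q)) ^ 2 := by
      rw [div_pow T, hT2]; field_simp; ring
    rw [h, Real.sqrt_sq (by positivity)]
  have hpT : p = (T - (1 - r ^ 2)) / (2 * r ^ 2 * q) := by
    rw [hp, hsq]; ring
  have hp0 : 0 ≤ p := by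
    rw [hpT]; apply div_nonneg (by linarith) (le_of_lt hden)
  have hp1 : p < 1 := by
    rw [hpT, div_lt_one hden]; linarith
  have hdp : (0:ℝ) < 1 - r ^ 2 * p ^ 2 := by nlinarith
  refine ⟨⟨hp0, hp1⟩, ?_, ?_⟩
  · rw [eq_div_iff (ne_of_gt hdp), hpT]
    field_simp
    nlinarith [hT2]
  · have hT' : Real.sqrt (1 + (4 * q ^ 2 - 2) * r ^ 2 + r ^ 4) = T := by
      rw [hTdef]; ring_nf
    rw [hT', div_eq_div_iff (ne_of_gt hdp) (by positivity), hpT]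
    field_simp
    linear_combination (r ^ 2 * (1 - r ^ 2) - r ^ 2 * T + (1 - r ^ 2) ^ 2 - (1 - r ^ 2) * T) * hT2
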